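/- Let f : ℝⁿ → ℝ be μ-strongly convex and differentiable with minimizer X⋆, and let X solve 0 = Ẍ + 2√μ Ẋ + ∇f(X) with X(0) = X₀, Ẋ(0) = 0. Define E(t) = e^{√μ t}( f(X(t)) − f⋆ + (1/2)‖Ẋ(t) + √μ(X(t) − X⋆)‖² ) − (μ/2)‖X₀ − X⋆‖² + ∫₀ᵗ (√μ/2) e^{√μ s}‖Ẋ(s)‖² ds + ∫₀ᵗ √μ e^{√μ s}( f⋆ − f(X(s)) − ⟨∇f(X(s)), X⋆ − X(s)⟩ − (μ/2)‖X(s) − X⋆‖² ) ds. Then E(t) = f(X₀) − f⋆ for all t ≥ 0. -/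

import Mathlib

open Filter MeasureTheory
open scoped RealInnerProductSpace Topology

lemma grad_cont_of_subgrad
    {E : Type*} [NormedAddCommGroup E] [InnerProductSpace ℝ E] [CompleteSpace E]
    (f : E → ℝ) (g : E → E)
    (hgrad : ∀ x, HasGradientAt f (g x) x)
    (hsub : ∀ x y, f x + ⟪g x, y - x⟫ ≤ f y) : Continuous g := by
  rw [continuous_iff_continuousAt]
  intro x₀
  rw [Metric.continuousAt_iff]
  intro ε hε
  have hlo := (hgrad x₀).hasFDerivAt.isLittleO.def (show (0:ℝ) < ε/8 by linarith)
  rw [Metric.eventually_nhds_iff] at hlo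
  obtain ⟨δ, hδ, hb⟩ := hlo
  refine ⟨δ/2, by linarith, ?_⟩
  intro x hx
  have hb' : ∀ y : E, dist y x₀ < δ →
      f y - f x₀ - ⟪g x₀, y - x₀⟫ ≤ (ε/8) * ‖y - x₀‖ := by
    intro y hy
    have := hb hy
    simp only [InnerProductSpace.toDual_apply_apply, Real.norm_eq_abs] at this
    exact (abs_le.1 this).2
  set v := g x - g x₀ with hv
  rcases eq_or_ne v 0 with h0 | h0
  · rw [dist_eq_norm]
    rw [← hv, h0]
    simpa using hε
  · have hvn : 0 < ‖v‖ := norm_pos_iff.2 h0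
    set h : E := (δ/(4*‖v‖)) • v with hh
    have hnh : ‖h‖ = δ/4 := by
      rw [hh, norm_smul, Real.norm_eq_abs, abs_of_pos (by positivity)]
      field_simp
    have hkey : ⟪v, h⟫ ≤ (ε/8) * ‖x + h - x₀‖ := by
      have h1 : ⟪g x, h⟫ ≤ f (x + h) - f x := by
        have := hsub x (x + h)
        rw [add_sub_cancel_left] at this
        linarith
      have h2 : f (x + h) - f x₀ - ⟪g x₀, x + h - x₀⟫ ≤ (ε/8) * ‖x + h - x₀‖ := by
        apply hb'
        calc dist (x + h) x₀ ≤ dist (x+h) x + dist x x₀ := dist_triangle _ _ _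
          _ < δ/4 + δ/2 := by
              rw [dist_eq_norm]
              simp only [add_sub_cancel_left]
              rw [hnh]; linarith
          _ ≤ δ := by linarith
      have h3 : f x₀ + ⟪g x₀, x - x₀⟫ ≤ f x := hsub x₀ x
      have h4 : ⟪g x₀, x + h - x₀⟫ = ⟪g x₀, x - x₀⟫ + ⟪g x₀, h⟫ := by
        rw [← inner_add_right]
        congr 1
        abel
      have : ⟪v, h⟫ = ⟪g x, h⟫ - ⟪g x₀, h⟫ := by rw [hv, inner_sub_left]
      linarith
    have hxh : ‖x + h - x₀‖ ≤ 3*δ/4 := by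
      calc ‖x + h - x₀‖ = ‖(x - x₀) + h‖ := by rw [add_sub_right_comm]
        _ ≤ ‖x - x₀‖ + ‖h‖ := norm_add_le _ _
        _ ≤ δ/2 + δ/4 := by
            rw [hnh]
            have := hx; rw [dist_eq_norm] at this
            linarith
        _ = 3*δ/4 := by ring
    have hinner : ⟪v, h⟫ = (δ/4) * ‖v‖ := by
      rw [hh, real_inner_smul_right, real_inner_self_eq_norm_sq]
      field_simp
    rw [dist_eq_norm, ← hv]
    have : (δ/4) * ‖v‖ ≤ (ε/8) * (3*δ/4) := by
      rw [← hinner]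
      calc ⟪v, h⟫ ≤ (ε/8) * ‖x + h - x₀‖ := hkey
        _ ≤ (ε/8) * (3*δ/4) := by nlinarith
    nlinarith

theorem sc_agm_ode_conservation_law
    {E : Type*} [NormedAddCommGroup E] [InnerProductSpace ℝ E] [CompleteSpace E]
    (f : E → ℝ) (g : E → E)
    (hgrad : ∀ x, HasGradientAt f (g x) x)
    (μ : ℝ) (hμ : 0 < μ)
    (hsc : ∀ x y, f x + ⟪g x, y - x⟫ + (μ / 2) * ‖y - x‖ ^ 2 ≤ f y)
    (X X' X'' : ℝ → E)
    (hX' : ∀ t ∈ Set.Ici (0:ℝ), HasDerivAt X (X' t) t)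
    (hX'' : ∀ t ∈ Set.Ici (0:ℝ), HasDerivAt X' (X'' t) t)
    (hODE : ∀ t ∈ Set.Ici (0:ℝ),
      X'' t + (2 * Real.sqrt μ) • X' t + g (X t) = 0)
    (X₀ : E) (hX0 : X 0 = X₀) (hXd0 : X' 0 = 0)
    (Xs : E) (hmin : ∀ x, f Xs ≤ f x) :
    ∀ t ≥ (0:ℝ),
      Real.exp (Real.sqrt μ * t)
          * (f (X t) - f Xs
            + (1 / 2) * ‖X' t + Real.sqrt μ • (X t - Xs)‖ ^ 2)
        - (μ / 2) * ‖X₀ - Xs‖ ^ 2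
        + (∫ s in (0:ℝ)..t,
            (Real.sqrt μ / 2) * Real.exp (Real.sqrt μ * s) * ‖X' s‖ ^ 2)
        + (∫ s in (0:ℝ)..t,
            Real.sqrt μ * Real.exp (Real.sqrt μ * s)
              * (f Xs - f (X s) - ⟪g (X s), Xs - X s⟫
                - (μ / 2) * ‖X s - Xs‖ ^ 2))
      = f X₀ - f Xs := by
  intro t ht
  set a := Real.sqrt μ with ha_def
  have ha : 0 < a := Real.sqrt_pos.2 hμ
  have ha2 : a ^ 2 = μ := Real.sq_sqrt hμ.le
  have hsub : ∀ x y, f x + ⟪g x, y - x⟫ ≤ f y := by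
    intro x y
    have h := hsc x y
    nlinarith [sq_nonneg ‖y - x‖, hμ.le]
  have hgc : Continuous g := grad_cont_of_subgrad f g hgrad hsub
  have hfc : Continuous f :=
    continuous_iff_continuousAt.2 fun x => (hgrad x).hasFDerivAt.continuousAt
  have hIcc : Set.uIcc (0:ℝ) t = Set.Icc 0 t := Set.uIcc_of_le ht
  have hmem : ∀ s ∈ Set.uIcc (0:ℝ) t, s ∈ Set.Ici (0:ℝ) := by
    rw [hIcc]; intro s hs; exact hs.1
  have hcX : ContinuousOn X (Set.uIcc (0:ℝ) t) := fun s hs =>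
    ((hX' s (hmem s hs)).continuousAt).continuousWithinAt
  have hcX' : ContinuousOn X' (Set.uIcc (0:ℝ) t) := fun s hs =>
    ((hX'' s (hmem s hs)).continuousAt).continuousWithinAt
  set I1 : ℝ → ℝ := fun s => a / 2 * Real.exp (a * s) * ‖X' s‖ ^ 2 with hI1_def
  set I2 : ℝ → ℝ := fun s =>
    a * Real.exp (a * s)
      * (f Xs - f (X s) - ⟪g (X s), Xs - X s⟫ - μ / 2 * ‖X s - Xs‖ ^ 2) with hI2_def
  have hce : ContinuousOn (fun s => Real.exp (a * s)) (Set.uIcc (0:ℝ) t) :=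
    (Real.continuous_exp.comp (continuous_const.mul continuous_id)).continuousOn
  have hcI1 : ContinuousOn I1 (Set.uIcc (0:ℝ) t) :=
    (continuousOn_const.mul hce).mul (hcX'.norm.pow 2)
  have hcI2 : ContinuousOn I2 (Set.uIcc (0:ℝ) t) := by
    apply (continuousOn_const.mul hce).mul
    apply ContinuousOn.sub
    apply ContinuousOn.sub
    apply ContinuousOn.sub continuousOn_const (hfc.comp_continuousOn hcX)
    exact ContinuousOn.inner (hgc.comp_continuousOn hcX) (continuousOn_const.sub hcX)
    exact continuousOn_const.mul (((hcX.sub continuousOn_const).norm).pow 2)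
  have hI1int : IntervalIntegrable I1 volume 0 t := hcI1.intervalIntegrable
  have hI2int : IntervalIntegrable I2 volume 0 t := hcI2.intervalIntegrable
  set Φ : ℝ → ℝ := fun s =>
    Real.exp (a * s) * (f (X s) - f Xs
      + 1 / 2 * ⟪X' s + a • (X s - Xs), X' s + a • (X s - Xs)⟫) with hΦ_def
  have hderiv : ∀ s ∈ Set.uIcc (0:ℝ) t, HasDerivAt Φ (-(I1 s + I2 s)) s := by
    intro s hs
    have hs0 := hmem s hs
    have hg_eq : g (X s) = -X'' s - (2 * a) • X' s := by
      have h := hODE s hs0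
      have := eq_neg_of_add_eq_zero_right h
      rw [this]; abel
    have h_exp : HasDerivAt (fun u => Real.exp (a * u)) (Real.exp (a * s) * a) s := by
      simpa using ((hasDerivAt_id s).const_mul a).exp
    have h_f : HasDerivAt (fun u => f (X u)) ⟪g (X s), X' s⟫ s := by
      have := (hgrad (X s)).hasFDerivAt.comp_hasDerivAt s (hX' s hs0)
      simp at this; exact this
    have h_V : HasDerivAt (fun u => X' u + a • (X u - Xs)) (X'' s + a • X' s) s :=
      (hX'' s hs0).add (((hX' s hs0).sub_const Xs).const_smul a)
    have h_inner : HasDerivAt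
        (fun u => ⟪X' u + a • (X u - Xs), X' u + a • (X u - Xs)⟫)
        (⟪X' s + a • (X s - Xs), X'' s + a • X' s⟫
          + ⟪X'' s + a • X' s, X' s + a • (X s - Xs)⟫) s :=
      HasDerivAt.inner ℝ h_V h_V
    have hΦ' : HasDerivAt Φ
        (Real.exp (a * s) * a * (f (X s) - f Xs
            + 1 / 2 * ⟪X' s + a • (X s - Xs), X' s + a • (X s - Xs)⟫)
          + Real.exp (a * s) * (⟪g (X s), X' s⟫
            + 1 / 2 * (⟪X' s + a • (X s - Xs), X'' s + a • X' s⟫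
              + ⟪X'' s + a • X' s, X' s + a • (X s - Xs)⟫))) s :=
      h_exp.mul ((h_f.sub_const (f Xs)).add (h_inner.const_mul (1/2)))
    convert hΦ' using 1
    simp only [hI1_def, hI2_def]
    rw [hg_eq, ← ha2]
    simp only [← real_inner_self_eq_norm_sq, inner_add_left, inner_add_right,
      inner_sub_left, inner_sub_right, inner_neg_left, inner_neg_right,
      real_inner_smul_left, real_inner_smul_right, real_inner_comm]
    ring
  have hftc : (∫ s in (0:ℝ)..t, -(I1 s + I2 s)) = Φ t - Φ 0 :=
    intervalIntegral.integral_eq_sub_of_hasDerivAt hderiv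
      ((hcI1.add hcI2).neg.intervalIntegrable)
  rw [intervalIntegral.integral_neg, intervalIntegral.integral_add hI1int hI2int] at hftc
  have hΦ0 : Φ 0 = f X₀ - f Xs + μ / 2 * ‖X₀ - Xs‖ ^ 2 := by
    have hin : ⟪(0:E) + a • (X₀ - Xs), (0:E) + a • (X₀ - Xs)⟫ = μ * ‖X₀ - Xs‖ ^ 2 := by
      rw [zero_add, real_inner_smul_left, real_inner_smul_right,
        real_inner_self_eq_norm_sq, ← mul_assoc, ← sq, ha2]
    rw [hΦ_def]
    simp only [mul_zero, Real.exp_zero, hX0, hXd0, hin]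
    ring
  have hΦt : Φ t = Real.exp (a * t) * (f (X t) - f Xs
      + 1 / 2 * ‖X' t + a • (X t - Xs)‖ ^ 2) := by
    rw [hΦ_def]
    simp only [real_inner_self_eq_norm_sq]
  rw [← hΦt]
  linarith
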